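/- Reporting via recursive range-minimum splitting: Let A : {l,…,r} → ℕ be injective. Define a process on a set Q of triples (value, index, interval): initialize with (A[k₀], k₀, [l,r]) where k₀ = argmin_{l≤t≤r} A[t]; repeatedly extract the triple with minimal value, output its index, and for its interval [l_t,r_t] split at the extracted index i_t, inserting the argmin triples of [l_t, i_t−1] and [i_t+1, r_t] (when nonempty). Then the process outputs every index in {l,…,r} exactly once, in increasing order of A-value. -/

import Mathlib

/-- **Reporting in sorted order via recursive range-minimum splitting.**
`A` is injective on `{l,…,r}` and `amin` returns the argmin of `A` on a
(nonempty) integer interval.  The process keeps a set `Q n` of intervals,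
starting from `{(l,r)}`; at each step it picks an interval `I ∈ Q n` whose
argmin has minimal `A`-value among all intervals of `Q n`, outputs that
argmin `out n`, and replaces `I` by the (nonempty) pieces to the left and
right of the argmin.  After `N = r + 1 − l` steps the process has output
every index of `{l,…,r}` exactly once, in increasing order of `A`-value. -/
theorem stmt18 (A : ℕ → ℕ) (l r : ℕ) (hlr : l ≤ r)
    (hinj : ∀ s t, l ≤ s → s ≤ r → l ≤ t → t ≤ r → A s = A t → s = t)
    (amin : ℕ × ℕ → ℕ)
    (hamin : ∀ I : ℕ × ℕ, I.1 ≤ I.2 → I.1 ≤ amin I ∧ amin I ≤ I.2 ∧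
      ∀ t, I.1 ≤ t → t ≤ I.2 → A (amin I) ≤ A t)
    (N : ℕ) (hN : N = r + 1 - l)
    (Q : ℕ → Finset (ℕ × ℕ)) (out : ℕ → ℕ)
    (hQ0 : Q 0 = {(l, r)})
    (hstep : ∀ n < N, ∃ I ∈ Q n, out n = amin I ∧
      (∀ J ∈ Q n, A (amin I) ≤ A (amin J)) ∧
      Q (n + 1) = (((Q n).erase I) ∪
        (if I.1 < amin I then {(I.1, amin I - 1)} else ∅)) ∪
        (if amin I < I.2 then {(amin I + 1, I.2)} else ∅)) :
    (∀ s, l ≤ s → s ≤ r → ∃! n, n < N ∧ out n = s) ∧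
    (∀ n, n + 1 < N → A (out n) < A (out (n + 1))) := by
  classical
  set f : ℕ × ℕ → Finset ℕ := fun I => Finset.Icc I.1 I.2 with hf
  have hstrict : ∀ s t, l ≤ s → s ≤ r → l ≤ t → t ≤ r → s ≠ t → A s ≤ A t → A s < A t := by
    intro s t hs1 hs2 ht1 ht2 hne hle
    rcases lt_or_eq_of_le hle with h | h
    · exact h
    · exact absurd (hinj s t hs1 hs2 ht1 ht2 h) hne
  have key : ∀ n, n ≤ N →
      (∀ I ∈ Q n, l ≤ I.1 ∧ I.1 ≤ I.2 ∧ I.2 ≤ r) ∧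
      (∀ I ∈ Q n, ∀ J ∈ Q n, I ≠ J → Disjoint (f I) (f J)) ∧
      ((Finset.range n).image out ∪ (Q n).biUnion f = Finset.Icc l r) ∧
      Disjoint ((Finset.range n).image out) ((Q n).biUnion f) ∧
      (∀ m < n, ∀ J ∈ Q n, A (out m) < A (amin J)) ∧
      (∀ m < n, ∀ m' < m, out m' ≠ out m) := by
    intro n
    induction n with
    | zero =>
      intro _
      refine ⟨?_, ?_, ?_, ?_, ?_, ?_⟩ <;> simp [hQ0, hf, hlr]
    | succ n ih =>
      intro hn1
      obtain ⟨ha, hb, hc, hd, he, hinj'⟩ := ih (Nat.le_of_succ_le hn1)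
      obtain ⟨I, hIQ, hout, hmin, hQs⟩ := hstep n (Nat.lt_of_succ_le hn1)
      obtain ⟨hIl, hI12, hIr⟩ := ha I hIQ
      obtain ⟨ha1, ha2, haminle⟩ := hamin I hI12
      have haminmem : amin I ∈ f I := by simp [hf, Finset.mem_Icc]; omega
      have hmem : ∀ J, J ∈ Q (n+1) ↔ (J ∈ Q n ∧ J ≠ I) ∨
          (I.1 < amin I ∧ J = (I.1, amin I - 1)) ∨
          (amin I < I.2 ∧ J = (amin I + 1, I.2)) := by
        intro J
        rw [hQs]
        by_cases h1 : I.1 < amin I <;> by_cases h2 : amin I < I.2 <;>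
          simp [h1, h2, Finset.mem_union, Finset.mem_erase, and_comm] <;> tauto
      have houtS : amin I ∈ (Q n).biUnion f :=
        Finset.mem_biUnion.mpr ⟨I, hIQ, haminmem⟩
      -- (a)
      have ha' : ∀ J ∈ Q (n+1), l ≤ J.1 ∧ J.1 ≤ J.2 ∧ J.2 ≤ r := by
        intro J hJ
        rcases (hmem J).1 hJ with ⟨hJQ, _⟩ | ⟨h1, rfl⟩ | ⟨h2, rfl⟩
        · exact ha J hJQ
        · simp; omega
        · simp; omega
      -- (b)
      have hb' : ∀ J ∈ Q (n+1), ∀ K ∈ Q (n+1), J ≠ K → Disjoint (f J) (f K) := by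
        have hsubL : I.1 < amin I → f (I.1, amin I - 1) ⊆ f I := by
          intro _; exact Finset.Icc_subset_Icc (by omega) (by omega)
        have hsubR : amin I < I.2 → f (amin I + 1, I.2) ⊆ f I := by
          intro _; exact Finset.Icc_subset_Icc (by omega) (by omega)
        intro J hJ K hK hne
        rcases (hmem J).1 hJ with ⟨hJQ, hJne⟩ | ⟨h1, rfl⟩ | ⟨h2, rfl⟩ <;>
          rcases (hmem K).1 hK with ⟨hKQ, hKne⟩ | ⟨g1, rfl⟩ | ⟨g2, rfl⟩
        · exact hb J hJQ K hKQ hne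
        · exact Disjoint.mono_right (hsubL g1) (hb J hJQ I hIQ hJne)
        · exact Disjoint.mono_right (hsubR g2) (hb J hJQ I hIQ hJne)
        · exact Disjoint.mono_left (hsubL h1) (hb I hIQ K hKQ (Ne.symm hKne))
        · exact absurd rfl hne
        · simp [hf, Finset.disjoint_left, Finset.mem_Icc]; omega
        · exact Disjoint.mono_left (hsubR h2) (hb I hIQ K hKQ (Ne.symm hKne))
        · simp [hf, Finset.disjoint_left, Finset.mem_Icc]; omega
        · exact absurd rfl hne
      -- covered-set identity
      have hSnew : (Q (n+1)).biUnion f = ((Q n).biUnion f).erase (amin I) := by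
        ext x
        simp only [Finset.mem_biUnion, Finset.mem_erase]
        constructor
        · rintro ⟨J, hJ, hxJ⟩
          rcases (hmem J).1 hJ with ⟨hJQ, hJne⟩ | ⟨h1, rfl⟩ | ⟨h2, rfl⟩
          · refine ⟨?_, J, hJQ, hxJ⟩
            intro hx
            subst hx
            exact Finset.disjoint_left.mp (hb J hJQ I hIQ hJne) hxJ haminmem
          · simp only [hf, Finset.mem_Icc] at hxJ
            exact ⟨by omega, I, hIQ, by simp [hf, Finset.mem_Icc]; omega⟩
          · simp only [hf, Finset.mem_Icc] at hxJ
            exact ⟨by omega, I, hIQ, by simp [hf, Finset.mem_Icc]; omega⟩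
        · rintro ⟨hxne, J, hJQ, hxJ⟩
          by_cases hJI : J = I
          · rw [hJI] at hxJ
            simp only [hf, Finset.mem_Icc] at hxJ
            rcases Nat.lt_or_ge x (amin I) with hx | hx
            · refine ⟨(I.1, amin I - 1), (hmem _).2 (Or.inr (Or.inl ⟨by omega, rfl⟩)), ?_⟩
              simp [hf, Finset.mem_Icc]; omega
            · have hx' : amin I < x := by omega
              refine ⟨(amin I + 1, I.2), (hmem _).2 (Or.inr (Or.inr ⟨by omega, rfl⟩)), ?_⟩
              simp [hf, Finset.mem_Icc]; omega
          · exact ⟨J, (hmem J).2 (Or.inl ⟨hJQ, hJI⟩), hxJ⟩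
      have hOutnew : (Finset.range (n+1)).image out
          = insert (amin I) ((Finset.range n).image out) := by
        rw [Finset.range_add_one, Finset.image_insert, hout]
      -- (c)
      have hc' : (Finset.range (n+1)).image out ∪ (Q (n+1)).biUnion f = Finset.Icc l r := by
        rw [hOutnew, hSnew, ← hc]
        ext x
        by_cases hx : x = amin I <;> simp [hx, houtS]
      -- (d)
      have hd' : Disjoint ((Finset.range (n+1)).image out) ((Q (n+1)).biUnion f) := by
        rw [hOutnew, hSnew]
        rw [Finset.disjoint_left]
        intro x hx hxS
        rcases Finset.mem_insert.mp hx with rfl | hx'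
        · exact (Finset.mem_erase.mp hxS).1 rfl
        · exact Finset.disjoint_left.mp hd hx' (Finset.mem_of_mem_erase hxS)
      -- key strict inequality for the new intervals
      have hkey : ∀ J ∈ Q (n+1), A (amin I) < A (amin J) := by
        intro J hJ
        rcases (hmem J).1 hJ with ⟨hJQ, hJne⟩ | ⟨h1, rfl⟩ | ⟨h2, rfl⟩
        · obtain ⟨hJl, hJ12, hJr⟩ := ha J hJQ
          obtain ⟨hb1, hb2, _⟩ := hamin J hJ12
          refine hstrict _ _ (by omega) (by omega) (by omega) (by omega) ?_ (hmin J hJQ)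
          intro heq
          have : amin I ∈ f J := by simp [hf, Finset.mem_Icc]; omega
          exact Finset.disjoint_left.mp (hb I hIQ J hJQ (Ne.symm hJne)) haminmem this
        · obtain ⟨hb1, hb2, _⟩ := hamin (I.1, amin I - 1) (by simp; omega)
          simp only at hb1 hb2
          refine hstrict _ _ (by omega) (by omega) (by omega) (by omega) (by omega) ?_
          exact haminle _ (by omega) (by omega)
        · obtain ⟨hb1, hb2, _⟩ := hamin (amin I + 1, I.2) (by simp; omega)
          simp only at hb1 hb2
          refine hstrict _ _ (by omega) (by omega) (by omega) (by omega) (by omega) ?_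
          exact haminle _ (by omega) (by omega)
      -- (e)
      have he' : ∀ m < n + 1, ∀ J ∈ Q (n+1), A (out m) < A (amin J) := by
        intro m hm J hJ
        rcases Nat.lt_succ_iff_lt_or_eq.mp hm with hm' | rfl
        · have hIlt : A (out m) < A (amin I) := he m hm' I hIQ
          rcases (hmem J).1 hJ with ⟨hJQ, _⟩ | ⟨h1, rfl⟩ | ⟨h2, rfl⟩
          · exact he m hm' J hJQ
          · obtain ⟨hb1, hb2, _⟩ := hamin (I.1, amin I - 1) (by simp; omega)
            simp only at hb1 hb2
            exact lt_of_lt_of_le hIlt (haminle _ (by omega) (by omega))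
          · obtain ⟨hb1, hb2, _⟩ := hamin (amin I + 1, I.2) (by simp; omega)
            simp only at hb1 hb2
            exact lt_of_lt_of_le hIlt (haminle _ (by omega) (by omega))
        · rw [hout]
          exact hkey J hJ
      -- (f)
      have hf' : ∀ m < n + 1, ∀ m' < m, out m' ≠ out m := by
        intro m hm m' hm'
        rcases Nat.lt_succ_iff_lt_or_eq.mp hm with hm1 | rfl
        · exact hinj' m hm1 m' hm'
        · intro heq
          have hmem' : out m' ∈ (Finset.range m).image out :=
            Finset.mem_image.mpr ⟨m', Finset.mem_range.mpr hm', rfl⟩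
          have : out m' ∈ (Q m).biUnion f := by rw [heq, hout]; exact houtS
          exact Finset.disjoint_left.mp hd hmem' this
      exact ⟨ha', hb', hc', hd', he', hf'⟩
  obtain ⟨_, _, hc, _, he, hinjN⟩ := key N le_rfl
  have hinj2 : ∀ m < N, ∀ m' < N, out m = out m' → m = m' := by
    intro m hm m' hm' heq
    rcases Nat.lt_trichotomy m m' with h | h | h
    · exact absurd heq (hinjN m' hm' m h)
    · exact h
    · exact absurd heq.symm (hinjN m hm m' h)
  have hcard : ((Finset.range N).image out).card = N := by
    rw [Finset.card_image_of_injOn, Finset.card_range]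
    intro a haa b hbb heq
    simp only [Finset.coe_range, Set.mem_Iio] at haa hbb
    exact hinj2 a haa b hbb heq
  have hsub : (Finset.range N).image out ⊆ Finset.Icc l r := by
    rw [← hc]; exact Finset.subset_union_left
  have hIccCard : (Finset.Icc l r).card = N := by
    rw [Nat.card_Icc]; omega
  have heqset : (Finset.range N).image out = Finset.Icc l r :=
    Finset.eq_of_subset_of_card_le hsub (by rw [hcard, hIccCard])
  constructor
  · intro s hs1 hs2
    have : s ∈ (Finset.range N).image out := by
      rw [heqset]; simp [Finset.mem_Icc]; omega
    obtain ⟨m, hm, houtm⟩ := Finset.mem_image.mp this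
    rw [Finset.mem_range] at hm
    refine ⟨m, ⟨hm, houtm⟩, ?_⟩
    rintro y ⟨hy, hys⟩
    exact hinj2 y hy m hm (by rw [hys, houtm])
  · intro n hn
    obtain ⟨I', hI', hout', _, _⟩ := hstep (n+1) hn
    obtain ⟨_, _, _, _, heN, _⟩ := key (n+1) (Nat.le_of_lt hn)
    rw [hout']
    exact heN n (Nat.lt_succ_self n) I' hI'
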